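/- Let F_n be the free group of rank n ≥ 3 and let P(n,k) denote the number of primitive elements (elements belonging to some free basis of F_n) of length exactly k. Then P(n,k) ≥ c₁ · (2n-3)^k for some constant c₁ > 0 independent of k. -/

import Mathlib

/-- An element of a free group is primitive if some automorphism maps it to a
generator, i.e., it is part of some free basis. -/
def IsPrimitive {n : ℕ} (u : FreeGroup (Fin n)) : Prop :=
  ∃ (e : FreeGroup (Fin n) ≃* FreeGroup (Fin n)) (i : Fin n), e u = FreeGroup.of i

/-- A chain-reduced word is a fixed point of `reduce`. -/
lemma my_reduce_chain {α : Type*} [DecidableEq α] (L : List (α × Bool))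
    (h : L.Chain' (fun a b => ¬(a.1 = b.1 ∧ a.2 = !b.2))) : FreeGroup.reduce L = L := by
  induction L with
  | nil => rfl
  | cons x t ih =>
    rw [FreeGroup.reduce.cons, ih h.tail]
    cases t with
    | nil => rfl
    | cons y ys =>
      have hxy : ¬(x.1 = y.1 ∧ x.2 = !y.2) := (List.isChain_cons_cons.mp h).1
      simp [if_neg hxy]

/-- A homomorphism fixing all generators other than `a₀` fixes words avoiding `a₀`. -/
lemma my_hom_fix {α : Type*} (h : FreeGroup α →* FreeGroup α) (a₀ : α)
    (hh : ∀ j, j ≠ a₀ → h (FreeGroup.of j) = FreeGroup.of j)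
    (M : List (α × Bool)) (hM : ∀ x ∈ M, x.1 ≠ a₀) :
    h (FreeGroup.mk M) = FreeGroup.mk M := by
  induction M with
  | nil => exact map_one h
  | cons x t ih =>
    have hx : FreeGroup.mk (x :: t) = FreeGroup.mk [x] * FreeGroup.mk t := by
      rw [FreeGroup.mul_mk]; rfl
    rw [hx, map_mul, ih (fun y hy => hM y (List.mem_cons_of_mem _ hy))]
    congr 1
    obtain ⟨a, b⟩ := x
    have ha : a ≠ a₀ := hM (a, b) List.mem_cons_self
    cases b with
    | true => exact hh a ha
    | false =>
      have hinv : FreeGroup.mk [(a, false)] = (FreeGroup.of a)⁻¹ := by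
        rw [show FreeGroup.of a = FreeGroup.mk [(a, true)] from rfl, FreeGroup.inv_mk]
        rfl
      rw [hinv, map_inv, hh a ha]

/-- A word of the form `x₀ · w(x₁,…)` is primitive. -/
lemma my_prim {N : ℕ} [NeZero N] (M : List (Fin N × Bool)) (hM : ∀ x ∈ M, x.1 ≠ 0) :
    IsPrimitive (FreeGroup.mk (((0 : Fin N), true) :: M)) := by
  set w : FreeGroup (Fin N) := FreeGroup.mk M with hw
  set φ : FreeGroup (Fin N) →* FreeGroup (Fin N) :=
    FreeGroup.lift (fun i => if i = 0 then FreeGroup.of 0 * w⁻¹ else FreeGroup.of i) with hφ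
  set ψ : FreeGroup (Fin N) →* FreeGroup (Fin N) :=
    FreeGroup.lift (fun i => if i = 0 then FreeGroup.of 0 * w else FreeGroup.of i) with hψ
  have hφ0 : φ (FreeGroup.of 0) = FreeGroup.of 0 * w⁻¹ := by simp [hφ]
  have hψ0 : ψ (FreeGroup.of 0) = FreeGroup.of 0 * w := by simp [hψ]
  have hφj : ∀ j, j ≠ (0 : Fin N) → φ (FreeGroup.of j) = FreeGroup.of j := by
    intro j hj; simp [hφ, if_neg hj]
  have hψj : ∀ j, j ≠ (0 : Fin N) → ψ (FreeGroup.of j) = FreeGroup.of j := by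
    intro j hj; simp [hψ, if_neg hj]
  have hφw : φ w = w := my_hom_fix φ 0 hφj M hM
  have hψw : ψ w = w := my_hom_fix ψ 0 hψj M hM
  have h1 : ψ.comp φ = MonoidHom.id _ := by
    apply FreeGroup.ext_hom
    intro a
    by_cases ha : a = 0
    · subst ha
      simp only [MonoidHom.comp_apply, MonoidHom.id_apply, hφ0, map_mul, map_inv, hψ0, hψw]
      group
    · simp [MonoidHom.comp_apply, hφj a ha, hψj a ha]
  have h2 : φ.comp ψ = MonoidHom.id _ := by
    apply FreeGroup.ext_hom
    intro a
    by_cases ha : a = 0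
    · subst ha
      simp only [MonoidHom.comp_apply, MonoidHom.id_apply, hψ0, map_mul, hφ0, hφw]
      group
    · simp [MonoidHom.comp_apply, hφj a ha, hψj a ha]
  refine ⟨MonoidHom.toMulEquiv φ ψ h1 h2, 0, ?_⟩
  have hsplit : FreeGroup.mk (((0 : Fin N), true) :: M) = FreeGroup.of 0 * w := by
    rw [hw, show FreeGroup.of (0 : Fin N) = FreeGroup.mk [((0 : Fin N), true)] from rfl,
      FreeGroup.mul_mk]
    rfl
  show φ (FreeGroup.mk (((0 : Fin N), true) :: M)) = FreeGroup.of 0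
  rw [hsplit, map_mul, hφ0, hφw]
  group

noncomputable def myE (p : ℕ) : (Fin (p+2) × Bool) ≃ Fin (2*p+3+1) :=
  Fintype.equivFinOfCardEq (by simp [Fintype.card_prod]; omega)

def myBar {q : ℕ} (x : Fin q × Bool) : Fin q × Bool := (x.1, !x.2)

noncomputable def myStep (p : ℕ) (prev : Fin (p+2) × Bool) (a : Fin (2*p+3)) :
    Fin (p+2) × Bool :=
  (myE p).symm (Fin.succAbove (myE p (myBar prev)) a)

lemma myStep_ne_bar (p : ℕ) (prev : Fin (p+2) × Bool) (a : Fin (2*p+3)) :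
    myStep p prev a ≠ myBar prev := by
  intro h
  exact Fin.succAbove_ne (myE p (myBar prev)) a ((Equiv.symm_apply_eq _).mp h)

lemma myStep_inj (p : ℕ) (prev : Fin (p+2) × Bool) {a a' : Fin (2*p+3)}
    (h : myStep p prev a = myStep p prev a') : a = a' :=
  Fin.succAbove_right_injective ((myE p).symm.injective h)

noncomputable def myF (p : ℕ) : (Fin (p+2) × Bool) → List (Fin (2*p+3)) → List (Fin (p+2) × Bool)
  | _, [] => []
  | prev, a :: t => myStep p prev a :: myF p (myStep p prev a) t

lemma myF_length (p : ℕ) (prev : Fin (p+2) × Bool) (l : List (Fin (2*p+3))) :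
    (myF p prev l).length = l.length := by
  induction l generalizing prev with
  | nil => rfl
  | cons a t ih => simp [myF, ih]

lemma myF_inj (p : ℕ) (prev : Fin (p+2) × Bool) {l l' : List (Fin (2*p+3))}
    (h : myF p prev l = myF p prev l') : l = l' := by
  induction l generalizing prev l' with
  | nil => cases l' with
    | nil => rfl
    | cons a t => simp [myF] at h
  | cons a t ih =>
    cases l' with
    | nil => simp [myF] at h
    | cons a' t' =>
      simp only [myF, List.cons.injEq] at h
      obtain ⟨h1, h2⟩ := h
      obtain rfl := myStep_inj p prev h1
      exact congrArg (a :: ·) (ih _ h2)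

lemma myStep_rel (p : ℕ) (prev : Fin (p+2) × Bool) (a : Fin (2*p+3)) :
    ¬(prev.1 = (myStep p prev a).1 ∧ prev.2 = !(myStep p prev a).2) := by
  rintro ⟨h1, h2⟩
  apply myStep_ne_bar p prev a
  show myStep p prev a = (prev.1, !prev.2)
  exact Prod.ext h1.symm (by simp [h2])

lemma myF_chain (p : ℕ) (prev : Fin (p+2) × Bool) (l : List (Fin (2*p+3))) :
    (prev :: myF p prev l).Chain' (fun a b => ¬(a.1 = b.1 ∧ a.2 = !b.2)) := by
  induction l generalizing prev with
  | nil => exact List.isChain_singleton _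
  | cons a t ih =>
    rw [show myF p prev (a :: t) = myStep p prev a :: myF p (myStep p prev a) t from rfl]
    exact List.isChain_cons_cons.mpr ⟨myStep_rel p prev a, ih _⟩

/-- Lower bound on the number of primitive elements of length `k` in `F_n`, `n ≥ 3`:
`P(n,k) ≥ c₁ · (2n-3)^k` for some constant `c₁ > 0`. -/
theorem stmt_10 (n : ℕ) (hn : 3 ≤ n) :
    ∃ c₁ : ℝ, 0 < c₁ ∧ ∀ k : ℕ, 1 ≤ k →
      c₁ * (2 * (n : ℝ) - 3) ^ k ≤
        (Set.ncard {u : FreeGroup (Fin n) |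
          IsPrimitive u ∧ (FreeGroup.toWord u).length = k} : ℝ) := by
  obtain ⟨p, rfl⟩ : ∃ p, n = p + 3 := ⟨n - 3, by omega⟩
  refine ⟨((2:ℝ)*p+3)⁻¹, by positivity, fun k hk => ?_⟩
  obtain ⟨k', rfl⟩ : ∃ k', k = k' + 1 := ⟨k - 1, by omega⟩
  set prev₀ : Fin (p+2) × Bool := (0, true) with hprev₀
  set ι : Fin (p+2) × Bool → Fin (p+3) × Bool := fun x => (x.1.succ, x.2) with hιdef
  have hι : Function.Injective ι := by
    rintro ⟨a, b⟩ ⟨a', b'⟩ h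
    simp only [hιdef, Prod.mk.injEq] at h
    exact Prod.ext (Fin.succ_injective _ h.1) h.2
  set g : List (Fin (2*p+3)) → FreeGroup (Fin (p+3)) :=
    fun l => FreeGroup.mk (((0 : Fin (p+3)), true) :: (myF p prev₀ l).map ι) with hg
  have hred : ∀ l, FreeGroup.toWord (g l) = ((0 : Fin (p+3)), true) :: (myF p prev₀ l).map ι := by
    intro l
    rw [hg]
    rw [FreeGroup.toWord_mk]
    apply my_reduce_chain
    simp only [List.Chain']
    rw [List.isChain_cons]
    constructor
    · intro y hy
      rw [List.head?_map] at hy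
      simp only [Option.mem_def, Option.map_eq_some_iff] at hy
      obtain ⟨c, _, rfl⟩ := hy
      rintro ⟨h1, -⟩
      exact Fin.succ_ne_zero c.1 h1.symm
    · rw [List.isChain_map]
      refine ((myF_chain p prev₀ l).tail).imp ?_
      rintro a b hab ⟨h1, h2⟩
      exact hab ⟨Fin.succ_injective _ h1, h2⟩
  have hlen : ∀ l : List (Fin (2*p+3)), (FreeGroup.toWord (g l)).length = l.length + 1 := by
    intro l
    rw [hred]
    simp [myF_length]
  have hginj : Function.Injective g := by
    intro l l' h
    have h2 := congrArg FreeGroup.toWord h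
    rw [hred, hred] at h2
    exact myF_inj p prev₀ (List.map_injective_iff.mpr hι (List.cons.inj h2).2)
  have hprim : ∀ l, IsPrimitive (g l) := by
    intro l
    apply my_prim
    intro x hx
    obtain ⟨c, -, rfl⟩ := List.mem_map.mp hx
    exact Fin.succ_ne_zero c.1
  set S := {u : FreeGroup (Fin (p+3)) |
      IsPrimitive u ∧ (FreeGroup.toWord u).length = k' + 1} with hS
  have hSfin : S.Finite :=
    Set.Finite.subset
      ((List.finite_length_eq (Fin (p+3) × Bool) (k'+1)).preimage
        (FreeGroup.toWord_injective.injOn))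
      (fun u hu => hu.2)
  set G : List.Vector (Fin (2*p+3)) k' → FreeGroup (Fin (p+3)) :=
    fun v => g v.toList with hG
  have hGinj : Function.Injective G := by
    intro v v' h
    exact List.Vector.toList_injective (hginj h)
  have hGsub : Set.range G ⊆ S := by
    rintro _ ⟨v, rfl⟩
    refine ⟨hprim _, ?_⟩
    rw [hG, hlen, v.toList_length]
  have hcard : Set.ncard (Set.range G) = (2*p+3)^k' := by
    rw [← Set.image_univ, Set.ncard_image_of_injective _ hGinj, Set.ncard_univ,
      Nat.card_eq_fintype_card, card_vector]
    simp
  have hle : (2*p+3)^k' ≤ S.ncard := hcard ▸ Set.ncard_le_ncard hGsub hSfin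
  have hB : ((2:ℝ)*p+3) ≠ 0 := by positivity
  have heq : ((2:ℝ)*p+3)⁻¹ * (2 * ((p+3 : ℕ) : ℝ) - 3) ^ (k'+1) = ((2:ℝ)*p+3)^k' := by
    push_cast
    rw [show (2 * ((p:ℝ)+3) - 3) = 2*(p:ℝ)+3 by ring, pow_succ, ← mul_assoc,
      mul_comm (((2:ℝ)*p+3)⁻¹), mul_assoc, inv_mul_cancel₀ hB, mul_one]
  rw [heq]
  have : ((2*p+3:ℕ):ℝ)^k' ≤ (S.ncard : ℝ) := by exact_mod_cast hle
  calc ((2:ℝ)*p+3)^k' = ((2*p+3:ℕ):ℝ)^k' := by push_cast; ring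
    _ ≤ (S.ncard : ℝ) := this
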